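/- arXiv:2505.01730 — 2 statements merged into one kernel-verified Lean document; each statement's English description precedes it below -/
import Mathlib

section
/- Soft-reset IF spike count formula: let θ* > 0, let inputs x₁, …, x_T ∈ ℝ be fed to a soft-reset integrate-and-fire neuron with initial potential v₀ = θ*/2, where at each step the potential is incremented by x_t and then, if it is ≥ θ*, a spike is emitted and θ* is subtracted. If the potential never goes negative during the run and the final potential v_T satisfies 0 ≤ v_T < θ*, then the total spike count s satisfies s = ⌊(Σ_t x_t)/θ* + 1/2⌋. -/
theorem soft_reset_spike_count (θs : ℝ) (hθs : 0 < θs) (T : ℕ) (x : ℕ → ℝ)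
    (v : ℕ → ℝ) (hv0 : v 0 = θs / 2)
    (hdyn : ∀ t, 1 ≤ t → t ≤ T →
      v t = v (t-1) + x t - θs * (if θs ≤ v (t-1) + x t then 1 else 0))
    (hnonneg : ∀ t ≤ T, 0 ≤ v t) (hfinal : v T < θs)
    (s : ℤ)
    (hs : (s : ℝ) = ∑ t ∈ Finset.Icc 1 T, (if θs ≤ v (t-1) + x t then (1:ℝ) else 0)) :
    s = ⌊(∑ t ∈ Finset.Icc 1 T, x t) / θs + 1/2⌋ := by
  have key : ∀ n ≤ T, v n = θs / 2 + (∑ t ∈ Finset.Icc 1 n, x t)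
      - θs * ∑ t ∈ Finset.Icc 1 n, (if θs ≤ v (t-1) + x t then (1:ℝ) else 0) := by
    intro n hn
    induction n with
    | zero => simp [hv0]
    | succ k ih =>
      have hk : k ≤ T := Nat.le_of_succ_le hn
      have hIcc : ∀ f : ℕ → ℝ, ∑ t ∈ Finset.Icc 1 (k+1), f t
          = (∑ t ∈ Finset.Icc 1 k, f t) + f (k+1) := by
        intro f
        rw [Finset.sum_Icc_succ_top (by omega)]
      rw [hIcc, hIcc, hdyn (k+1) (by omega) hn]
      have := ih hk
      simp only [Nat.add_sub_cancel]
      rw [this]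
      ring
  have hvT := key T le_rfl
  have hsum : (∑ t ∈ Finset.Icc 1 T, x t) / θs + 1/2 = (s : ℝ) + v T / θs := by
    rw [hvT, hs]
    field_simp
    ring
  rw [hsum]
  have h1 : 0 ≤ v T / θs := div_nonneg (hnonneg T le_rfl) hθs.le
  have h2 : v T / θs < 1 := (div_lt_one hθs).mpr hfinal
  rw [eq_comm, Int.floor_eq_iff]
  refine ⟨by linarith, by linarith⟩
end

section
/- Precise IF-layer equivalence (Theorem on IF operation): let θ > 0, L_{n−1}, L_n positive integers, and x₁, …, x_{L_{n−1}} ∈ ℝ with Σᵢ xᵢ = x. Run Algorithm PASC: (stage 1) soft-reset IF with threshold θ/L_n and initial potential θ/(2L_n) on inputs xᵢ, counting spikes; (stage 2) for max(L_{n−1}, L_n) − 1 more timesteps without input, emit excitatory spikes when v ≥ θ/L_n and inhibitory spikes when v < 0, updating the signed spike count s; (stage 3) from initial potential s·θ/L_n, run L_n timesteps of thresholded subtraction emitting output spikes. Then the sum of the L_n output spike values (each ∈ {0, θ/L_n}) equals the QCFS activation ĥ(x) = θ·clip((1/L_n)·⌊x·L_n/θ + 1/2⌋, 0, 1). -/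
/-- Stage-1 soft-reset IF step: integrate input `xi`; if the potential reaches the
threshold, emit an excitatory spike (increment count) and soft reset. -/
noncomputable def pascStage1Step (θs : ℝ) (p : ℝ × ℤ) (xi : ℝ) : ℝ × ℤ :=
  if θs ≤ p.1 + xi then (p.1 + xi - θs, p.2 + 1) else (p.1 + xi, p.2)

/-- Stage-2 step without input: excitatory spike if `v ≥ θs`, inhibitory spike if `v < 0`. -/
noncomputable def pascStage2Step (θs : ℝ) (p : ℝ × ℤ) : ℝ × ℤ :=
  if θs ≤ p.1 then (p.1 - θs, p.2 + 1)
  else if p.1 < 0 then (p.1 + θs, p.2 - 1)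
  else p

/-- Stage-3 membrane potential: thresholded subtraction from initial value `init`. -/
noncomputable def pascStage3V (θs : ℝ) (init : ℝ) : ℕ → ℝ
  | 0 => init
  | t + 1 => pascStage3V θs init t - (if θs ≤ pascStage3V θs init t then θs else 0)

noncomputable def qcfs (θ : ℝ) (L : ℕ) (x : ℝ) : ℝ :=
  θ * min (max ((1 / (L : ℝ)) * (⌊x * L / θ + 1/2⌋ : ℤ)) 0) 1

variable {θs : ℝ}

lemma stage1_step_conserve (p : ℝ × ℤ) (a : ℝ) :
    (pascStage1Step θs p a).1 + ((pascStage1Step θs p a).2 : ℝ) * θs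
      = p.1 + (p.2 : ℝ) * θs + a := by
  unfold pascStage1Step
  split <;> simp <;> push_cast <;> ring

lemma stage1_conserve : ∀ (l : List ℝ) (p : ℝ × ℤ),
    ((l.foldl (pascStage1Step θs) p).1 + ((l.foldl (pascStage1Step θs) p).2 : ℝ) * θs
      = p.1 + (p.2 : ℝ) * θs + l.sum)
  | [], p => by simp
  | a :: l, p => by
    simp only [List.foldl_cons, List.sum_cons]
    rw [stage1_conserve l, stage1_step_conserve]
    ring

lemma stage1_step_cases (hθs : 0 < θs) (p : ℝ × ℤ) (a : ℝ) :
    ((pascStage1Step θs p a).1 < 0 → (pascStage1Step θs p a).2 = p.2) ∧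
    (θs ≤ (pascStage1Step θs p a).1 → (pascStage1Step θs p a).2 = p.2 + 1) ∧
    ((pascStage1Step θs p a).2 = p.2 ∨ (pascStage1Step θs p a).2 = p.2 + 1) := by
  unfold pascStage1Step
  split_ifs with h
  · refine ⟨fun hv => absurd hv (by simp; linarith), fun _ => rfl, Or.inr rfl⟩
  · push_neg at h
    refine ⟨fun _ => rfl, fun hv => absurd hv (by simp; linarith), Or.inl rfl⟩

lemma stage1_last (hθs : 0 < θs) : ∀ (l : List ℝ) (p : ℝ × ℤ), l ≠ [] →
    (((l.foldl (pascStage1Step θs) p).1 < 0 →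
        (l.foldl (pascStage1Step θs) p).2 ≤ p.2 + l.length - 1) ∧
     (θs ≤ (l.foldl (pascStage1Step θs) p).1 →
        p.2 + 1 ≤ (l.foldl (pascStage1Step θs) p).2))
  | [], _, h => absurd rfl h
  | [a], p, _ => by
    simp only [List.foldl_cons, List.foldl_nil, List.length_cons, List.length_nil]
    obtain ⟨h1, h2, _⟩ := stage1_step_cases hθs p a
    constructor
    · intro hv; have := h1 hv; omega
    · intro hv; have := h2 hv; omega
  | a :: b :: l, p, _ => by
    have ih := stage1_last hθs (b :: l) (pascStage1Step θs p a) (by simp)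
    obtain ⟨_, _, h3⟩ := stage1_step_cases hθs p a
    simp only [List.foldl_cons] at ih ⊢
    simp only [List.length_cons] at ih ⊢
    constructor
    · intro hv
      have := ih.1 hv
      rcases h3 with h | h <;> rw [h] at this <;> push_cast at this ⊢ <;> omega
    · intro hv
      have := ih.2 hv
      rcases h3 with h | h <;> rw [h] at this <;> omega

lemma stage2 (hθs : 0 < θs) : ∀ (k : ℕ) (p : ℝ × ℤ),
    (((pascStage2Step θs)^[k] p).1 + (((pascStage2Step θs)^[k] p).2 : ℝ) * θs
        = p.1 + (p.2 : ℝ) * θs) ∧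
    ((0 ≤ ((pascStage2Step θs)^[k] p).1 ∧ ((pascStage2Step θs)^[k] p).1 < θs) ∨
      (((pascStage2Step θs)^[k] p).1 < 0 ∧ p.1 < 0 ∧
        ((pascStage2Step θs)^[k] p).2 = p.2 - k) ∨
      (θs ≤ ((pascStage2Step θs)^[k] p).1 ∧ θs ≤ p.1 ∧
        ((pascStage2Step θs)^[k] p).2 = p.2 + k))
  | 0, p => by
    refine ⟨by simp, ?_⟩
    simp only [Function.iterate_zero, id_eq]
    rcases lt_or_ge p.1 0 with h | h
    · exact Or.inr (Or.inl ⟨h, h, by simp⟩)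
    · rcases lt_or_ge p.1 θs with h' | h'
      · exact Or.inl ⟨h, h'⟩
      · exact Or.inr (Or.inr ⟨h', h', by simp⟩)
  | (k+1), p => by
    rw [Function.iterate_succ_apply]
    obtain ⟨ihc, iht⟩ := stage2 hθs k (pascStage2Step θs p)
    by_cases h1 : θs ≤ p.1
    · simp only [pascStage2Step, if_pos h1] at ihc iht ⊢
      refine ⟨by rw [ihc]; simp; push_cast; ring, ?_⟩
      rcases iht with h | h | h
      · exact Or.inl h
      · exact absurd h.2.1 (by simp; linarith)
      · refine Or.inr (Or.inr ⟨h.1, h1, ?_⟩)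
        rw [h.2.2]; simp; push_cast; ring
    · by_cases h2 : p.1 < 0
      · simp only [pascStage2Step, if_neg h1, if_pos h2] at ihc iht ⊢
        refine ⟨by rw [ihc]; simp; push_cast; ring, ?_⟩
        rcases iht with h | h | h
        · exact Or.inl h
        · refine Or.inr (Or.inl ⟨h.1, h2, ?_⟩)
          rw [h.2.2]; simp; push_cast; ring
        · exact absurd h.2.1 (by simp; linarith)
      · simp only [pascStage2Step, if_neg h1, if_neg h2] at ihc iht ⊢
        push_neg at h1 h2
        refine ⟨ihc, ?_⟩
        rcases iht with h | h | h
        · exact Or.inl h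
        · exact absurd h.2.1 (by linarith)
        · exact absurd h.2.1 (by linarith)

lemma stage3V (hθs : 0 < θs) (s : ℤ) : ∀ (t : ℕ),
    pascStage3V θs ((s : ℝ) * θs) t = ((s - min (t : ℤ) (max s 0) : ℤ) : ℝ) * θs
  | 0 => by
    have h : min (0 : ℤ) (max s 0) = 0 := by omega
    simp [pascStage3V, h]
  | (t+1) => by
    have hc : ((t+1 : ℕ) : ℤ) = (t : ℤ) + 1 := by push_cast; ring
    have hcond : (θs ≤ ((s - min (t : ℤ) (max s 0) : ℤ) : ℝ) * θs)
        ↔ 1 ≤ s - min (t : ℤ) (max s 0) := by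
      rw [le_mul_iff_one_le_left hθs]
      norm_cast
    rw [show pascStage3V θs ((s : ℝ) * θs) (t+1)
        = pascStage3V θs ((s : ℝ) * θs) t
          - (if θs ≤ pascStage3V θs ((s : ℝ) * θs) t then θs else 0) from rfl,
      stage3V hθs s t, hc]
    rcases le_or_gt 1 (s - min (t : ℤ) (max s 0)) with h1 | h1
    · rw [if_pos (hcond.mpr h1),
        show s - min ((t : ℤ) + 1) (max s 0) = (s - min (t : ℤ) (max s 0)) - 1 from by omega]
      push_cast
      ring
    · rw [if_neg (fun h => absurd (hcond.mp h) (by omega)),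
        show s - min ((t : ℤ) + 1) (max s 0) = s - min (t : ℤ) (max s 0) from by omega]
      ring

lemma stage3_sum (hθs : 0 < θs) (s : ℤ) (N : ℕ) :
    (∑ t ∈ Finset.range N, (if θs ≤ pascStage3V θs ((s : ℝ) * θs) t then θs else 0))
      = ((min (max s 0) (N : ℤ) : ℤ) : ℝ) * θs := by
  induction N with
  | zero => simp [show min (max s 0) (0 : ℤ) = 0 from by omega]
  | succ N ih =>
    rw [Finset.sum_range_succ, ih, stage3V hθs s N]
    have hc : ((N+1 : ℕ) : ℤ) = (N : ℤ) + 1 := by push_cast; ring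
    have hcond : (θs ≤ ((s - min (N : ℤ) (max s 0) : ℤ) : ℝ) * θs)
        ↔ 1 ≤ s - min (N : ℤ) (max s 0) := by
      rw [le_mul_iff_one_le_left hθs]; norm_cast
    rcases le_or_gt 1 (s - min (N : ℤ) (max s 0)) with h1 | h1
    · rw [if_pos (hcond.mpr h1), hc,
        show min (max s 0) ((N : ℤ) + 1) = min (max s 0) (N : ℤ) + 1 from by omega]
      push_cast
      ring
    · rw [if_neg (fun h => absurd (hcond.mp h) (by omega)), hc,
        show min (max s 0) ((N : ℤ) + 1) = min (max s 0) (N : ℤ) from by omega]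
      ring
theorem pasc_if_layer_equivalence (θ : ℝ) (hθ : 0 < θ)
    (Lm Ln : ℕ) (hLm : 0 < Lm) (hLn : 0 < Ln)
    (x : Fin Lm → ℝ) (X : ℝ) (hX : ∑ i, x i = X) :
    (∑ t ∈ Finset.range Ln,
        (if θ / Ln ≤ pascStage3V (θ / Ln)
            ((((pascStage2Step (θ / Ln))^[max Lm Ln - 1]
                ((List.ofFn x).foldl (pascStage1Step (θ / Ln)) (θ / Ln / 2, 0))).2 : ℝ)
              * (θ / Ln)) t
          then θ / Ln else 0))
      = qcfs θ Ln X := by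
  have hLnR : (0:ℝ) < (Ln : ℝ) := by exact_mod_cast hLn
  set θs : ℝ := θ / Ln with hθsdef
  have hθs : 0 < θs := div_pos hθ hLnR
  set p1 := (List.ofFn x).foldl (pascStage1Step θs) (θs / 2, 0) with hp1
  set k : ℕ := max Lm Ln - 1 with hk
  set p2 := (pascStage2Step θs)^[k] p1 with hp2
  have hkZ : (k : ℤ) = max (Lm : ℤ) (Ln : ℤ) - 1 := by
    have h1 : Lm ≤ max Lm Ln := le_max_left _ _
    have h2 : Ln ≤ max Lm Ln := le_max_right _ _
    rw [hk]; push_cast; omega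
  -- conservation
  have hne : List.ofFn x ≠ [] := by
    intro h
    have := congrArg List.length h
    simp at this
    omega
  have hsum : (List.ofFn x).sum = X := by rw [List.sum_ofFn]; exact hX
  have hc1 : p1.1 + (p1.2 : ℝ) * θs = θs / 2 + X := by
    have h := stage1_conserve (θs := θs) (List.ofFn x) (θs / 2, 0)
    rw [hsum] at h
    simpa using h
  obtain ⟨hc2, htri⟩ := stage2 hθs k p1
  rw [← hp2] at hc2 htri
  have hc : p2.1 + (p2.2 : ℝ) * θs = θs / 2 + X := by rw [hc2, hc1]
  set n : ℤ := ⌊X * Ln / θ + 1/2⌋ with hn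
  have hXdiv : X * Ln / θ + 1/2 = p2.1 / θs + (p2.2 : ℝ) := by
    have hθ' : (θ : ℝ) ≠ 0 := ne_of_gt hθ
    have hLn' : (Ln : ℝ) ≠ 0 := ne_of_gt hLnR
    field_simp [hθsdef] at hc ⊢
    have hθL : θs * Ln = θ := by rw [hθsdef]; exact div_mul_cancel₀ θ hLn'
    nlinarith [hc, congrArg (· * θ) hc, congrArg (· * (2 * X)) hθL]
  have hnf : n = ⌊p2.1 / θs⌋ + p2.2 := by
    rw [hn, hXdiv, Int.floor_add_intCast]
  -- clamp equality
  have hclamp : min (max p2.2 0) (Ln : ℤ) = min (max n 0) (Ln : ℤ) := by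
    rcases htri with h | h | h
    · have h0 : ⌊p2.1 / θs⌋ = 0 := by
        rw [Int.floor_eq_zero_iff]
        exact ⟨div_nonneg h.1 hθs.le, (div_lt_one hθs).mpr h.2⟩
      omega
    · have hfl : ⌊p2.1 / θs⌋ < 0 := by
        rw [Int.floor_lt]
        push_cast
        exact div_neg_of_neg_of_pos h.1 hθs
      have hs1 : p1.2 ≤ (0 : ℤ) + (List.ofFn x).length - 1 :=
        (stage1_last hθs (List.ofFn x) (θs / 2, 0) hne).1 h.2.1
      simp only [List.length_ofFn] at hs1
      have hs2 : p2.2 = p1.2 - k := h.2.2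
      omega
    · have hfl : 1 ≤ ⌊p2.1 / θs⌋ := by
        rw [Int.le_floor]
        push_cast
        exact (one_le_div hθs).mpr h.1
      have hs1 : (0 : ℤ) + 1 ≤ p1.2 :=
        (stage1_last hθs (List.ofFn x) (θs / 2, 0) hne).2 h.2.1
      have hs2 : p2.2 = p1.2 + k := h.2.2
      omega
  -- final computation
  rw [stage3_sum hθs p2.2 Ln, hclamp]
  unfold qcfs
  rw [← hn]
  rcases le_or_gt n 0 with h0 | h0
  · have h1 : min (max n 0) (Ln : ℤ) = 0 := by omega
    have h2 : (1 / (Ln : ℝ)) * (n : ℝ) ≤ 0 :=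
      mul_nonpos_of_nonneg_of_nonpos (by positivity) (by exact_mod_cast h0)
    rw [h1, max_eq_right h2]
    simp
  · rcases le_or_gt n (Ln : ℤ) with h1 | h1
    · have h2 : min (max n 0) (Ln : ℤ) = n := by omega
      have ha0 : 0 ≤ (1 / (Ln : ℝ)) * (n : ℝ) := by
        have : (0:ℝ) ≤ (n : ℝ) := by exact_mod_cast h0.le
        positivity
      have ha1 : (1 / (Ln : ℝ)) * (n : ℝ) ≤ 1 := by
        have hn' : (n : ℝ) ≤ (Ln : ℝ) := by exact_mod_cast h1
        rw [show (1 / (Ln : ℝ)) * (n : ℝ) = (n : ℝ) / (Ln : ℝ) from by ring]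
        exact (div_le_one hLnR).mpr hn'
      rw [h2, max_eq_left ha0, min_eq_left ha1, hθsdef]
      ring
    · have h2 : min (max n 0) (Ln : ℤ) = (Ln : ℤ) := by omega
      have ha1 : (1 : ℝ) ≤ (1 / (Ln : ℝ)) * (n : ℝ) := by
        have hn' : (Ln : ℝ) ≤ (n : ℝ) := by exact_mod_cast h1.le
        rw [show (1 / (Ln : ℝ)) * (n : ℝ) = (n : ℝ) / (Ln : ℝ) from by ring]
        exact (one_le_div hLnR).mpr hn'
      rw [h2, max_eq_left (by linarith), min_eq_right ha1, hθsdef]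
      field_simp
      norm_cast
end
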